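/- Let s be a positive integer with gcd(s, m) = 1, let 1 ≤ k < n, let g_1, …, g_n ∈ F_{q^m}, and suppose the k Moore vectors (g_1^{[si]}, …, g_n^{[si]}), i = 0, …, k − 1, form a basis over F_{q^m} of a linear code C ⊆ F_{q^m}^n that is MRD of dimension k. Then g_1, …, g_n are linearly independent over F_q. -/

import Mathlib

open Matrix

/-- The rank over the subfield `Fq` of a vector with entries in `K`:
the `Fq`-dimension of the `Fq`-span of its coordinates. -/
noncomputable def rankQ (Fq : Type) {K : Type} [Field Fq] [Field K] [Algebra Fq K] {n : ℕ}
    (v : Fin n → K) : ℕ :=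
  Module.finrank Fq (Submodule.span Fq (Set.range v))

/-- The minimum rank distance of a linear rank-metric code `C ⊆ K^n`. -/
noncomputable def minRankDist (Fq : Type) {K : Type} [Field Fq] [Field K] [Algebra Fq K] {n : ℕ}
    (C : Submodule K (Fin n → K)) : ℕ :=
  sInf (rankQ Fq '' {c : Fin n → K | c ∈ C ∧ c ≠ 0})

/-- A linear code `C ⊆ K^n` of dimension `k` over `K` is MRD if its minimum
rank distance equals `n - k + 1`. -/
def IsMRD (Fq : Type) {K : Type} [Field Fq] [Field K] [Algebra Fq K] {n : ℕ}
    (C : Submodule K (Fin n → K)) (k : ℕ) : Prop :=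
  Module.finrank K C = k ∧ minRankDist Fq C = n - k + 1

/-- `G` is a generator matrix of `C`: its rows form a `K`-basis of `C`. -/
def IsGenMat {K : Type} [Field K] {k n : ℕ} (C : Submodule K (Fin n → K))
    (G : Matrix (Fin k) (Fin n) K) : Prop :=
  LinearIndependent K (fun i => G i) ∧ Submodule.span K (Set.range fun i => G i) = C

/-- if the `k` Moore vectors of `g_1, …, g_n` form a basis of an MRD code
of dimension `k < n`, then `g_1, …, g_n` are linearly independent over `F_q`. -/
theorem stmt9 {q m s n k : ℕ} (Fq K : Type) [Field Fq] [Fintype Fq] [Field K] [Fintype K]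
    [Algebra Fq K] (hq : Fintype.card Fq = q) (hK : Fintype.card K = q ^ m)
    (hs : 0 < s) (hgcd : Nat.gcd s m = 1) (hk : 1 ≤ k) (hkn : k < n)
    (g : Fin n → K) (C : Submodule K (Fin n → K))
    (hindep : LinearIndependent K
      (fun i : Fin k => fun j : Fin n => (g j) ^ q ^ (s * (i : ℕ))))
    (hspan : Submodule.span K
      (Set.range fun i : Fin k => fun j : Fin n => (g j) ^ q ^ (s * (i : ℕ))) = C)
    (hMRD : IsMRD Fq C k) :
    LinearIndependent Fq g := by
  classical
  by_contra hdep
  obtain ⟨lam, hsum, j0, hj0⟩ := Fintype.not_linearIndependent_iff.mp hdep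
  -- characteristic setup
  set p := ringChar Fq with hpdef
  haveI : CharP Fq p := ringChar.charP Fq
  obtain ⟨e, hp, hcard⟩ := FiniteField.card Fq p
  haveI hpK : CharP K p := charP_of_injective_algebraMap (algebraMap Fq K).injective p
  haveI : Fact p.Prime := ⟨hp⟩
  haveI : ExpChar K p := ExpChar.prime hp
  have hqp : q = p ^ (e : ℕ) := by rw [← hq, hcard]
  -- every codeword is orthogonal to lam
  have horth : ∀ c ∈ C, ∑ j, algebraMap Fq K (lam j) * c j = 0 := by
    let L : (Fin n → K) →ₗ[K] K :=
      { toFun := fun v => ∑ j, algebraMap Fq K (lam j) * v j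
        map_add' := by intro a b; simp [mul_add, Finset.sum_add_distrib]
        map_smul' := by
          intro a v
          simp only [smul_eq_mul, RingHom.id_apply, Finset.mul_sum, Pi.smul_apply]
          exact Finset.sum_congr rfl fun _ _ => by ring }
    have hCL : C ≤ LinearMap.ker L := by
      rw [← hspan, Submodule.span_le]
      rintro _ ⟨i, rfl⟩
      simp only [SetLike.mem_coe, LinearMap.mem_ker]
      show ∑ j, algebraMap Fq K (lam j) * g j ^ q ^ (s * (i : ℕ)) = 0
      have key : ∀ j, algebraMap Fq K (lam j) * g j ^ q ^ (s * (i : ℕ))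
          = (algebraMap Fq K (lam j) * g j) ^ q ^ (s * (i : ℕ)) := by
        intro j
        rw [mul_pow, ← map_pow]
        congr 2
        have h := FiniteField.pow_card_pow (s * (i : ℕ)) (lam j)
        rw [hq] at h
        exact h.symm
      simp_rw [key]
      have hexp : q ^ (s * (i : ℕ)) = p ^ ((e : ℕ) * (s * (i : ℕ))) := by
        rw [hqp, ← pow_mul]
      rw [hexp, ← sum_pow_char_pow]
      have hz : (∑ j, algebraMap Fq K (lam j) * g j) = 0 := by
        rw [← hsum]
        exact Finset.sum_congr rfl fun j _ => (Algebra.smul_def _ _).symm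
      rw [hz, zero_pow (pow_ne_zero _ hp.ne_zero)]
    intro c hc
    exact hCL hc
  -- choose a set T of k-1 coordinates avoiding j0
  obtain ⟨T, hTsub, hTcard⟩ :=
    Finset.exists_subset_card_eq (s := ({j0}ᶜ : Finset (Fin n))) (n := k - 1)
      (by rw [Finset.card_compl]; simp; omega)
  have hj0T : j0 ∉ T := fun h => by simpa using hTsub h
  -- find a nonzero codeword vanishing on T
  haveI : FiniteDimensional K C := by
    exact FiniteDimensional.finiteDimensional_submodule C
  let f : C →ₗ[K] (↥T → K) :=
    (LinearMap.pi fun t : ↥T => LinearMap.proj (t : Fin n)) ∘ₗ C.subtype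
  have hker : LinearMap.ker f ≠ ⊥ := by
    intro hbot
    have h1 := LinearMap.finrank_range_add_finrank_ker f
    have h2 : Module.finrank K (LinearMap.range f) ≤ Module.finrank K (↥T → K) :=
      Submodule.finrank_le _
    have h3 : Module.finrank K (↥T → K) = k - 1 := by
      rw [Module.finrank_pi]
      simp [hTcard]
    have h4 : Module.finrank K (LinearMap.ker f) = 0 := by
      rw [hbot, finrank_bot]
    rw [hMRD.1, h4] at h1
    omega
  obtain ⟨x, hxker, hx0⟩ := Submodule.exists_mem_ne_zero_of_ne_bot hker
  set c : Fin n → K := (x : Fin n → K) with hcdef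
  have hcC : c ∈ C := x.2
  have hc0 : c ≠ 0 := by
    intro h
    apply hx0
    exact Subtype.ext h
  have hvanish : ∀ j ∈ T, c j = 0 := by
    intro j hj
    have := congrFun (LinearMap.mem_ker.mp hxker) ⟨j, hj⟩
    simpa [f] using this
  -- c has rank at most n - k
  set S : Finset (Fin n) := insert j0 T with hSdef
  have hScard : S.card = k := by
    rw [hSdef, Finset.card_insert_of_notMem hj0T, hTcard]
    omega
  have hsubspan : Set.range c ⊆
      (Submodule.span Fq (c '' (↑(Sᶜ) : Set (Fin n))) : Set K) := by
    rintro _ ⟨j, rfl⟩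
    by_cases hjT : j ∈ T
    · rw [hvanish j hjT]; exact Submodule.zero_mem _
    by_cases hjj0 : j = j0
    · rw [hjj0]
      -- lam j0 • c j0 = - ∑_{j ∈ Sᶜ} lam j • c j
      have h0 := horth c hcC
      have hsplit := Finset.sum_add_sum_compl S (fun j => algebraMap Fq K (lam j) * c j)
      have hS0 : ∑ j ∈ S, algebraMap Fq K (lam j) * c j
          = algebraMap Fq K (lam j0) * c j0 := by
        rw [hSdef, Finset.sum_insert hj0T]
        rw [Finset.sum_eq_zero fun j hj => by rw [hvanish j hj, mul_zero]]
        ring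
      have hkey : lam j0 • c j0 = ∑ j ∈ Sᶜ, (-(lam j)) • c j := by
        rw [Algebra.smul_def]
        have : algebraMap Fq K (lam j0) * c j0 = - ∑ j ∈ Sᶜ, algebraMap Fq K (lam j) * c j := by
          rw [← hS0]; linear_combination hsplit + h0
        rw [this, ← Finset.sum_neg_distrib]
        exact Finset.sum_congr rfl fun j _ => by rw [Algebra.smul_def, map_neg]; ring
      have hmem : lam j0 • c j0 ∈ Submodule.span Fq (c '' (↑(Sᶜ) : Set (Fin n))) := by
        rw [hkey]
        exact Submodule.sum_mem _ fun j hj =>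
          Submodule.smul_mem _ _ (Submodule.subset_span ⟨j, by simpa using hj, rfl⟩)
      have : c j0 = (lam j0)⁻¹ • (lam j0 • c j0) := (inv_smul_smul₀ hj0 _).symm
      rw [this]
      exact Submodule.smul_mem _ _ hmem
    · apply Submodule.subset_span
      refine ⟨j, ?_, rfl⟩
      simp [hSdef, hjT, hjj0]
  have hrank : rankQ Fq c ≤ n - k := by
    have hle : Submodule.span Fq (Set.range c) ≤
        Submodule.span Fq (c '' (↑(Sᶜ) : Set (Fin n))) :=
      Submodule.span_le.mpr hsubspan
    haveI : Module.Finite Fq K := Module.Finite.of_finite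
    calc rankQ Fq c ≤ Module.finrank Fq (Submodule.span Fq (c '' (↑(Sᶜ) : Set (Fin n)))) :=
          Submodule.finrank_mono hle
      _ = Module.finrank Fq (Submodule.span Fq ((Sᶜ.image c : Finset K) : Set K)) := by
          rw [Finset.coe_image]
      _ ≤ (Sᶜ.image c).card := finrank_span_finset_le_card _
      _ ≤ Sᶜ.card := Finset.card_image_le
      _ = n - k := by rw [Finset.card_compl, hScard]; simp
  have hmem : rankQ Fq c ∈ rankQ Fq '' {c : Fin n → K | c ∈ C ∧ c ≠ 0} :=
    ⟨c, ⟨hcC, hc0⟩, rfl⟩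
  have hle := Nat.sInf_le hmem
  have := hMRD.2
  unfold minRankDist at this
  omega
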